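/- Let T_α be the Bellman optimality operator of a finite discounted MDP with α ∈ (0,1), let φ be a deterministic policy and u : Fin m → ℝ a vector such that T_α^φ u = T_α u (φ is greedy with respect to u) and sp(T_α u − u) ≤ (1−α)·ε/α for some ε > 0. If v^φ : Fin m → ℝ satisfies v^φ = T_α^φ v^φ and v* : Fin m → ℝ satisfies v* = T_α v*, then v^φ(x) ≥ v*(x) − ε for every state x; that is, the policy φ returned by the value iteration algorithm with the span stopping rule is ε-optimal. -/

import Mathlib

open Finset

/-- Span seminorm `sp(u) = max_x u(x) - min_x u(x)` on `Fin m → ℝ`. -/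
noncomputable def sp {m : ℕ} [NeZero m] (u : Fin m → ℝ) : ℝ :=
  (univ.sup' univ_nonempty u) - (univ.inf' univ_nonempty u)

/-- Bellman optimality operator of a finite discounted MDP. -/
noncomputable def bellman {m K : ℕ} (A : Fin m → Finset (Fin K))
    (hA : ∀ x, (A x).Nonempty) (r : Fin m → Fin K → ℝ)
    (p : Fin m → Fin K → Fin m → ℝ) (α : ℝ) (v : Fin m → ℝ) : Fin m → ℝ :=
  fun x => (A x).sup' (hA x) (fun a => r x a + α * ∑ y, p x a y * v y)

/-- Operator `T_α^φ` of a deterministic policy `φ`. -/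
noncomputable def bellmanPol {m K : ℕ} (r : Fin m → Fin K → ℝ)
    (p : Fin m → Fin K → Fin m → ℝ) (α : ℝ) (φ : Fin m → Fin K)
    (v : Fin m → ℝ) : Fin m → ℝ :=
  fun x => r x (φ x) + α * ∑ y, p x (φ x) y * v y

theorem stmt1 {m K : ℕ} [NeZero m] (A : Fin m → Finset (Fin K))
    (hA : ∀ x, (A x).Nonempty) (r : Fin m → Fin K → ℝ)
    (p : Fin m → Fin K → Fin m → ℝ)
    (hp0 : ∀ x a y, a ∈ A x → 0 ≤ p x a y)
    (hp1 : ∀ x a, a ∈ A x → ∑ y, p x a y = 1)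
    (α ε : ℝ) (hα0 : 0 < α) (hα1 : α < 1) (hε : 0 < ε)
    (φ : Fin m → Fin K) (hφ : ∀ x, φ x ∈ A x)
    (u : Fin m → ℝ)
    (hgreedy : bellmanPol r p α φ u = bellman A hA r p α u)
    (hstop : sp (bellman A hA r p α u - u) ≤ (1 - α) * ε / α)
    (vφ : Fin m → ℝ) (hvφ : vφ = bellmanPol r p α φ vφ)
    (vstar : Fin m → ℝ) (hvstar : vstar = bellman A hA r p α vstar) :
    ∀ x, vφ x ≥ vstar x - ε := by
  set Tu := bellman A hA r p α u with hTu
  -- key sum lemma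
  have sumle : ∀ (x : Fin m) (a : Fin K), a ∈ A x → ∀ (v v' : Fin m → ℝ) (k : ℝ),
      (∀ y, v y ≤ v' y + k) →
      ∑ y, p x a y * v y ≤ (∑ y, p x a y * v' y) + k := by
    intro x a ha v v' k h
    have h1 : ∑ y, p x a y * v y ≤ ∑ y, p x a y * (v' y + k) :=
      Finset.sum_le_sum (fun y _ => mul_le_mul_of_nonneg_left (h y) (hp0 x a y ha))
    have h2 : ∑ y, p x a y * (v' y + k) = (∑ y, p x a y * v' y) + k := by
      simp only [mul_add, Finset.sum_add_distrib, ← Finset.sum_mul, hp1 x a ha, one_mul]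
    linarith
  -- monotone shift for policy operator
  have polMono : ∀ (v v' : Fin m → ℝ) (k : ℝ), (∀ y, v y ≤ v' y + k) →
      ∀ x, bellmanPol r p α φ v x ≤ bellmanPol r p α φ v' x + α * k := by
    intro v v' k h x
    have := sumle x (φ x) (hφ x) v v' k h
    simp only [bellmanPol]
    nlinarith
  -- monotone shift for Bellman operator
  have bellMono : ∀ (v v' : Fin m → ℝ) (k : ℝ), (∀ y, v y ≤ v' y + k) →
      ∀ x, bellman A hA r p α v x ≤ bellman A hA r p α v' x + α * k := by
    intro v v' k h x
    simp only [bellman]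
    apply Finset.sup'_le
    intro a ha
    have h1 := sumle x a ha v v' k h
    have h2 : r x a + α * ∑ y, p x a y * v' y ≤
        (A x).sup' (hA x) (fun a => r x a + α * ∑ y, p x a y * v' y) :=
      Finset.le_sup' (fun a => r x a + α * ∑ y, p x a y * v' y) ha
    nlinarith
  have ne : (univ : Finset (Fin m)).Nonempty := univ_nonempty
  set L := univ.inf' ne (fun x => Tu x - u x) with hL
  set U := univ.sup' ne (fun x => Tu x - u x) with hU
  have hUL : U - L ≤ (1 - α) * ε / α := by
    have : sp (Tu - u) = U - L := by
      simp only [sp, hU, hL]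
      congr 1
    linarith [hstop, this.symm.le, this.le]
  have hLle : ∀ y, L ≤ Tu y - u y := fun y => Finset.inf'_le _ (mem_univ y)
  have hUge : ∀ y, Tu y - u y ≤ U := fun y => Finset.le_sup' (fun x => Tu x - u x) (mem_univ y)
  -- lower bound: w ≤ vφ where w = Tu + αL/(1-α)
  set c : ℝ := α * L / (1 - α) with hc
  set d : ℝ := α * U / (1 - α) with hd
  have h1α : (0:ℝ) < 1 - α := by linarith
  have w_le : ∀ x, Tu x + c ≤ bellmanPol r p α φ (fun y => Tu y + c) x := by
    intro x
    -- T^φ u ≤ T^φ Tu + α(-L)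
    have h1 : bellmanPol r p α φ u x ≤ bellmanPol r p α φ Tu x + α * (-L) := by
      apply polMono
      intro y; have := hLle y; linarith
    have h2 : bellmanPol r p α φ Tu x ≤ bellmanPol r p α φ (fun y => Tu y + c) x + α * (-c) := by
      apply polMono
      intro y; linarith
    have h3 : bellmanPol r p α φ u x = Tu x := by rw [hgreedy]
    have hcc : c = α * L + α * c := by
      have e : c * (1 - α) = α * L := div_mul_cancel₀ _ (ne_of_gt h1α)
      linarith
    linarith
  -- fixed point comparison for vφ
  have comp_pol : ∀ x, Tu x + c ≤ vφ x := by
    by_contra hcon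
    push_neg at hcon
    set D : ℝ := univ.sup' ne (fun x => Tu x + c - vφ x) with hD
    have hDle : ∀ x, Tu x + c - vφ x ≤ D := fun x => Finset.le_sup' (fun x => Tu x + c - vφ x) (mem_univ x)
    have hstep : ∀ x, Tu x + c - vφ x ≤ α * D := by
      intro x
      have h1 := w_le x
      have h2 : bellmanPol r p α φ (fun y => Tu y + c) x ≤ bellmanPol r p α φ vφ x + α * D := by
        apply polMono
        intro y; have := hDle y; linarith
      have h3 : bellmanPol r p α φ vφ x = vφ x := by rw [← hvφ]
      linarith
    have hDαD : D ≤ α * D := Finset.sup'_le _ _ (fun x _ => hstep x)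
    have hD0 : D ≤ 0 := by nlinarith
    obtain ⟨x, hx⟩ := hcon
    have := hDle x
    linarith
  -- upper bound for vstar: vstar ≤ Tu + d
  have w'_le : ∀ x, bellman A hA r p α (fun y => Tu y + d) x ≤ Tu x + d := by
    intro x
    have h1 : bellman A hA r p α (fun y => Tu y + d) x ≤ bellman A hA r p α Tu x + α * d := by
      apply bellMono; intro y; linarith
    have h2 : bellman A hA r p α Tu x ≤ bellman A hA r p α u x + α * U := by
      apply bellMono; intro y; have := hUge y; linarith
    have hdd : d = α * U + α * d := by
      have e : d * (1 - α) = α * U := div_mul_cancel₀ _ (ne_of_gt h1α)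
      linarith
    have h3 : bellman A hA r p α u x = Tu x := rfl
    linarith
  have comp_bell : ∀ x, vstar x ≤ Tu x + d := by
    by_contra hcon
    push_neg at hcon
    set D : ℝ := univ.sup' ne (fun x => vstar x - (Tu x + d)) with hD
    have hDle : ∀ x, vstar x - (Tu x + d) ≤ D := fun x => Finset.le_sup' (fun x => vstar x - (Tu x + d)) (mem_univ x)
    have hstep : ∀ x, vstar x - (Tu x + d) ≤ α * D := by
      intro x
      have h1 : bellman A hA r p α vstar x ≤ bellman A hA r p α (fun y => Tu y + d) x + α * D := by
        apply bellMono; intro y; have := hDle y; linarith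
      have h2 := w'_le x
      have h3 : bellman A hA r p α vstar x = vstar x := by rw [← hvstar]
      linarith
    have hDαD : D ≤ α * D := Finset.sup'_le _ _ (fun x _ => hstep x)
    have hD0 : D ≤ 0 := by nlinarith
    obtain ⟨x, hx⟩ := hcon
    have := hDle x
    linarith
  intro x
  have h1 := comp_pol x
  have h2 := comp_bell x
  have h3 : d - c ≤ ε := by
    have : α * (U - L) ≤ α * ((1 - α) * ε / α) :=
      mul_le_mul_of_nonneg_left hUL hα0.le
    have h4 : α * ((1 - α) * ε / α) = (1 - α) * ε := by field_simp
    have h5 : d - c = α * (U - L) / (1 - α) := by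
      rw [eq_div_iff (ne_of_gt h1α)]
      have e1 : c * (1 - α) = α * L := div_mul_cancel₀ _ (ne_of_gt h1α)
      have e2 : d * (1 - α) = α * U := div_mul_cancel₀ _ (ne_of_gt h1α)
      linarith
    rw [h5]
    rw [div_le_iff₀ h1α]
    nlinarith
  linarith
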